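/- arXiv:1809.10844 — 2 statements merged into one kernel-verified Lean document; each statement's English description precedes it below -/
import Mathlib

section
/- Let Γ be an N×N matrix with all entries strictly positive, ξ, ρ ∈ ℝ^N_{>0}, and r ∈ (0,1). Then the iteration z ↦ (ξ ⊘ (Γᵀ(ρ ⊘ (Γ z))))^r on ℝ^N_{>0} is strictly contractive in the Thompson metric and admits a unique fixed point z* ∈ ℝ^N_{>0}. -/
noncomputable def dT {n : ℕ} (z w : Fin n → ℝ) : ℝ :=
  Real.log (max (⨆ i, z i / w i) (⨆ i, w i / z i))

/-- The fixed-point iteration `z ↦ (ξ ⊘ (Γᵀ (ρ ⊘ (Γ z))))^r`. -/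
noncomputable def iterMap {N : ℕ} (Γ : Matrix (Fin N) (Fin N) ℝ)
    (ξ ρ : Fin N → ℝ) (r : ℝ) (z : Fin N → ℝ) : Fin N → ℝ :=
  fun i => (ξ i / (Γ.transpose.mulVec (fun j => ρ j / Γ.mulVec z j)) i) ^ r

section aux
variable {N : ℕ}

lemma mulVec_pos' (hN : 0 < N) (Γ : Matrix (Fin N) (Fin N) ℝ)
    (hΓ : ∀ i j, 0 < Γ i j) (z : Fin N → ℝ) (hz : ∀ i, 0 < z i) :
    ∀ j, 0 < Γ.mulVec z j := by
  intro j
  haveI : Nonempty (Fin N) := ⟨⟨0, hN⟩⟩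
  rw [Matrix.mulVec, dotProduct]
  exact Finset.sum_pos (fun k _ => mul_pos (hΓ j k) (hz k)) Finset.univ_nonempty

lemma gpos (hN : 0 < N) (Γ : Matrix (Fin N) (Fin N) ℝ)
    (hΓ : ∀ i j, 0 < Γ i j) (ρ : Fin N → ℝ) (hρ : ∀ i, 0 < ρ i)
    (z : Fin N → ℝ) (hz : ∀ i, 0 < z i) :
    ∀ i, 0 < (Γ.transpose.mulVec (fun j => ρ j / Γ.mulVec z j)) i := by
  apply mulVec_pos' hN _ (fun i j => hΓ j i)
  exact fun j => div_pos (hρ j) (mulVec_pos' hN Γ hΓ z hz j)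

lemma iter_pos (hN : 0 < N) (Γ : Matrix (Fin N) (Fin N) ℝ)
    (hΓ : ∀ i j, 0 < Γ i j) (ξ ρ : Fin N → ℝ)
    (hξ : ∀ i, 0 < ξ i) (hρ : ∀ i, 0 < ρ i) (r : ℝ)
    (z : Fin N → ℝ) (hz : ∀ i, 0 < z i) :
    ∀ i, 0 < iterMap Γ ξ ρ r z i := by
  intro i
  exact Real.rpow_pos_of_pos (div_pos (hξ i) (gpos hN Γ hΓ ρ hρ z hz i)) r

lemma mulVec_mono (Γ : Matrix (Fin N) (Fin N) ℝ) (hΓ : ∀ i j, 0 < Γ i j)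
    (z w : Fin N → ℝ) (e : ℝ) (h : ∀ j, z j ≤ e * w j) :
    ∀ j, Γ.mulVec z j ≤ e * Γ.mulVec w j := by
  intro j
  rw [Matrix.mulVec, Matrix.mulVec, dotProduct, dotProduct, Finset.mul_sum]
  refine Finset.sum_le_sum fun k _ => ?_
  calc Γ j k * z k ≤ Γ j k * (e * w k) :=
        mul_le_mul_of_nonneg_left (h k) (hΓ j k).le
    _ = e * (Γ j k * w k) := by ring

/-- The key monotonicity estimate. -/
lemma iter_le (hN : 0 < N) (Γ : Matrix (Fin N) (Fin N) ℝ)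
    (hΓ : ∀ i j, 0 < Γ i j) (ξ ρ : Fin N → ℝ)
    (hξ : ∀ i, 0 < ξ i) (hρ : ∀ i, 0 < ρ i) (r : ℝ) (hr0 : 0 < r)
    (z w : Fin N → ℝ) (hz : ∀ i, 0 < z i) (hw : ∀ i, 0 < w i)
    (c : ℝ) (hc : 0 ≤ c) (h : ∀ j, z j ≤ Real.exp c * w j) :
    ∀ i, iterMap Γ ξ ρ r z i ≤ Real.exp (r * c) * iterMap Γ ξ ρ r w i := by
  intro i
  have hΓz := mulVec_pos' hN Γ hΓ z hz
  have hΓw := mulVec_pos' hN Γ hΓ w hw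
  -- Γ z ≤ e^c Γ w
  have h1 : ∀ j, Γ.mulVec z j ≤ Real.exp c * Γ.mulVec w j := mulVec_mono Γ hΓ z w _ h
  -- ρ / Γw ≤ e^c * (ρ / Γz)
  have h2 : ∀ j, ρ j / Γ.mulVec w j ≤ Real.exp c * (ρ j / Γ.mulVec z j) := by
    intro j
    rw [mul_div_assoc', div_le_div_iff₀ (hΓw j) (hΓz j)]
    calc ρ j * Γ.mulVec z j ≤ ρ j * (Real.exp c * Γ.mulVec w j) :=
          mul_le_mul_of_nonneg_left (h1 j) (hρ j).le
      _ = Real.exp c * ρ j * Γ.mulVec w j := by ring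
  -- g w ≤ e^c * g z
  have h3 : ∀ i, (Γ.transpose.mulVec (fun j => ρ j / Γ.mulVec w j)) i ≤
      Real.exp c * (Γ.transpose.mulVec (fun j => ρ j / Γ.mulVec z j)) i :=
    mulVec_mono Γ.transpose (fun i j => hΓ j i) _ _ _ h2
  have hgz := gpos hN Γ hΓ ρ hρ z hz
  have hgw := gpos hN Γ hΓ ρ hρ w hw
  -- ξ / g z ≤ e^c * (ξ / g w)
  have h4 : ξ i / (Γ.transpose.mulVec (fun j => ρ j / Γ.mulVec z j)) i ≤
      Real.exp c * (ξ i / (Γ.transpose.mulVec (fun j => ρ j / Γ.mulVec w j)) i) := by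
    rw [mul_div_assoc', div_le_div_iff₀ (hgz i) (hgw i)]
    calc ξ i * (Γ.transpose.mulVec (fun j => ρ j / Γ.mulVec w j)) i
        ≤ ξ i * (Real.exp c * (Γ.transpose.mulVec (fun j => ρ j / Γ.mulVec z j)) i) :=
          mul_le_mul_of_nonneg_left (h3 i) (hξ i).le
      _ = Real.exp c * ξ i * (Γ.transpose.mulVec (fun j => ρ j / Γ.mulVec z j)) i := by ring
  -- raise to power r
  have hbase : 0 < ξ i / (Γ.transpose.mulVec (fun j => ρ j / Γ.mulVec w j)) i :=
    div_pos (hξ i) (hgw i)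
  have h5 : iterMap Γ ξ ρ r z i ≤
      (Real.exp c * (ξ i / (Γ.transpose.mulVec (fun j => ρ j / Γ.mulVec w j)) i)) ^ r := by
    apply Real.rpow_le_rpow (le_of_lt (div_pos (hξ i) (hgz i))) h4 hr0.le
  calc iterMap Γ ξ ρ r z i ≤ _ := h5
    _ = (Real.exp c) ^ r * iterMap Γ ξ ρ r w i := by
        rw [Real.mul_rpow (Real.exp_pos c).le hbase.le]; rfl
    _ = Real.exp (r * c) * iterMap Γ ξ ρ r w i := by
        rw [← Real.exp_mul, mul_comm c r]

lemma dT_nonneg (hN : 0 < N) (z w : Fin N → ℝ) (hz : ∀ i, 0 < z i) (hw : ∀ i, 0 < w i) :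
    0 ≤ dT z w := by
  haveI : Nonempty (Fin N) := ⟨⟨0, hN⟩⟩
  obtain ⟨i⟩ := ‹Nonempty (Fin N)›
  have hb1 : BddAbove (Set.range fun i => z i / w i) := (Set.finite_range _).bddAbove
  have hb2 : BddAbove (Set.range fun i => w i / z i) := (Set.finite_range _).bddAbove
  have h1 : z i / w i ≤ ⨆ i, z i / w i := le_ciSup hb1 i
  have h2 : w i / z i ≤ ⨆ i, w i / z i := le_ciSup hb2 i
  -- max ≥ 1: the two terms multiply to 1
  have key : 1 ≤ max (⨆ i, z i / w i) (⨆ i, w i / z i) := by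
    rcases le_total (z i / w i) 1 with hle | hle
    · have : 1 ≤ w i / z i := by
        rw [le_div_iff₀ (hz i)]; rw [div_le_one (hw i)] at hle; linarith
      exact le_max_of_le_right (this.trans h2)
    · exact le_max_of_le_left (hle.trans h1)
  have := Real.log_le_log (by norm_num) key
  rw [dT]; simpa using this

lemma le_exp_dT (hN : 0 < N) (z w : Fin N → ℝ) (hz : ∀ i, 0 < z i) (hw : ∀ i, 0 < w i) :
    ∀ j, z j ≤ Real.exp (dT z w) * w j := by
  intro j
  haveI : Nonempty (Fin N) := ⟨⟨0, hN⟩⟩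
  have hb1 : BddAbove (Set.range fun i => z i / w i) := (Set.finite_range _).bddAbove
  have h1 : z j / w j ≤ ⨆ i, z i / w i := le_ciSup hb1 j
  have hmaxpos : 0 < max (⨆ i, z i / w i) (⨆ i, w i / z i) :=
    lt_of_lt_of_le (div_pos (hz j) (hw j)) (h1.trans (le_max_left _ _))
  have : z j / w j ≤ Real.exp (dT z w) := by
    rw [dT, Real.exp_log hmaxpos]
    exact h1.trans (le_max_left _ _)
  calc z j = (z j / w j) * w j := (div_mul_cancel₀ (z j) (hw j).ne').symm
    _ ≤ Real.exp (dT z w) * w j := mul_le_mul_of_nonneg_right this (hw j).le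

lemma dT_le (hN : 0 < N) (z w : Fin N → ℝ) (hz : ∀ i, 0 < z i) (hw : ∀ i, 0 < w i)
    (c : ℝ) (h1 : ∀ i, z i ≤ Real.exp c * w i) (h2 : ∀ i, w i ≤ Real.exp c * z i) :
    dT z w ≤ c := by
  haveI : Nonempty (Fin N) := ⟨⟨0, hN⟩⟩
  obtain ⟨i0⟩ := ‹Nonempty (Fin N)›
  have hs1 : (⨆ i, z i / w i) ≤ Real.exp c :=
    ciSup_le fun i => (div_le_iff₀ (hw i)).2 (by linarith [h1 i])
  have hs2 : (⨆ i, w i / z i) ≤ Real.exp c :=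
    ciSup_le fun i => (div_le_iff₀ (hz i)).2 (by linarith [h2 i])
  have hb1 : BddAbove (Set.range fun i => z i / w i) := (Set.finite_range _).bddAbove
  have hmaxpos : 0 < max (⨆ i, z i / w i) (⨆ i, w i / z i) :=
    lt_of_lt_of_le (div_pos (hz i0) (hw i0)) ((le_ciSup hb1 i0).trans (le_max_left _ _))
  rw [dT, ← Real.log_exp c]
  exact Real.log_le_log hmaxpos (max_le hs1 hs2)

end aux

theorem stmt_6 {N : ℕ} (hN : 0 < N) (Γ : Matrix (Fin N) (Fin N) ℝ)
    (hΓ : ∀ i j, 0 < Γ i j) (ξ ρ : Fin N → ℝ)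
    (hξ : ∀ i, 0 < ξ i) (hρ : ∀ i, 0 < ρ i) (r : ℝ) (hr0 : 0 < r) (hr1 : r < 1) :
    (∀ z w : Fin N → ℝ, (∀ i, 0 < z i) → (∀ i, 0 < w i) →
      dT (iterMap Γ ξ ρ r z) (iterMap Γ ξ ρ r w) ≤ r * dT z w) ∧
    (∃! zopt : Fin N → ℝ, (∀ i, 0 < zopt i) ∧ iterMap Γ ξ ρ r zopt = zopt) := by
  haveI : Nonempty (Fin N) := ⟨⟨0, hN⟩⟩
  have contract : ∀ z w : Fin N → ℝ, (∀ i, 0 < z i) → (∀ i, 0 < w i) →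
      dT (iterMap Γ ξ ρ r z) (iterMap Γ ξ ρ r w) ≤ r * dT z w := by
    intro z w hz hw
    have hc : 0 ≤ dT z w := dT_nonneg hN z w hz hw
    have hTz := iter_pos hN Γ hΓ ξ ρ hξ hρ r z hz
    have hTw := iter_pos hN Γ hΓ ξ ρ hξ hρ r w hw
    apply dT_le hN _ _ hTz hTw
    · exact iter_le hN Γ hΓ ξ ρ hξ hρ r hr0 z w hz hw _ hc (le_exp_dT hN z w hz hw)
    · have hsymm : dT w z = dT z w := by rw [dT, dT, max_comm]
      exact iter_le hN Γ hΓ ξ ρ hξ hρ r hr0 w z hw hz _ hc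
        (hsymm ▸ le_exp_dT hN w z hw hz)
  refine ⟨contract, ?_⟩
  -- transfer to log coordinates
  set F : (Fin N → ℝ) → (Fin N → ℝ) :=
    fun x i => Real.log (iterMap Γ ξ ρ r (fun j => Real.exp (x j)) i) with hF
  have hFlip : ∀ x y : Fin N → ℝ, ∀ i, |F x i - F y i| ≤ r * dist x y := by
    intro x y i
    set z := fun j => Real.exp (x j)
    set w := fun j => Real.exp (y j)
    have hz : ∀ j, 0 < z j := fun j => Real.exp_pos _
    have hw : ∀ j, 0 < w j := fun j => Real.exp_pos _
    have hd : 0 ≤ dist x y := dist_nonneg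
    have hzw : ∀ j, z j ≤ Real.exp (dist x y) * w j := by
      intro j
      have hd' := dist_le_pi_dist x y j
      rw [Real.dist_eq] at hd'
      have : x j - y j ≤ dist x y := (le_abs_self _).trans hd'
      calc z j = Real.exp (x j - y j) * w j := by rw [← Real.exp_add]; ring_nf; rfl
        _ ≤ Real.exp (dist x y) * w j :=
          mul_le_mul_of_nonneg_right (Real.exp_le_exp.2 this) (hw j).le
    have hwz : ∀ j, w j ≤ Real.exp (dist x y) * z j := by
      intro j
      have hd' := dist_le_pi_dist x y j
      rw [Real.dist_eq, abs_sub_comm] at hd'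
      have : y j - x j ≤ dist x y := (le_abs_self _).trans hd'
      calc w j = Real.exp (y j - x j) * z j := by rw [← Real.exp_add]; ring_nf; rfl
        _ ≤ Real.exp (dist x y) * z j :=
          mul_le_mul_of_nonneg_right (Real.exp_le_exp.2 this) (hz j).le
    have hTz := iter_pos hN Γ hΓ ξ ρ hξ hρ r z hz
    have hTw := iter_pos hN Γ hΓ ξ ρ hξ hρ r w hw
    have e1 := iter_le hN Γ hΓ ξ ρ hξ hρ r hr0 z w hz hw _ hd hzw i
    have e2 := iter_le hN Γ hΓ ξ ρ hξ hρ r hr0 w z hw hz _ hd hwz i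
    rw [abs_sub_le_iff]
    constructor
    · have h := Real.log_le_log (hTz i) e1
      rw [Real.log_mul (Real.exp_ne_zero _) (hTw i).ne', Real.log_exp] at h
      simp only [hF]
      linarith
    · have h := Real.log_le_log (hTw i) e2
      rw [Real.log_mul (Real.exp_ne_zero _) (hTz i).ne', Real.log_exp] at h
      simp only [hF]
      linarith
  have hr0' : (0:ℝ) ≤ r := hr0.le
  have hLip : LipschitzWith ⟨r, hr0'⟩ F := by
    apply LipschitzWith.of_dist_le_mul
    intro x y
    rw [dist_pi_le_iff (by positivity)]
    intro i
    rw [Real.dist_eq]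
    exact hFlip x y i
  have hcon : ContractingWith ⟨r, hr0'⟩ F := ⟨by exact_mod_cast hr1, hLip⟩
  set xstar := ContractingWith.fixedPoint F hcon with hxs
  have hxfix : Function.IsFixedPt F xstar := hcon.fixedPoint_isFixedPt
  set zopt : Fin N → ℝ := fun i => Real.exp (xstar i) with hzopt
  have hzpos : ∀ i, 0 < zopt i := fun i => Real.exp_pos _
  have hTpos := iter_pos hN Γ hΓ ξ ρ hξ hρ r zopt hzpos
  have hfix : iterMap Γ ξ ρ r zopt = zopt := by
    funext i
    have : F xstar i = xstar i := congrFun hxfix i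
    rw [hF] at this
    have := congrArg Real.exp this
    rwa [Real.exp_log (hTpos i)] at this
  refine ⟨zopt, ⟨hzpos, hfix⟩, ?_⟩
  rintro z' ⟨hz'pos, hz'fix⟩
  have hlogfix : Function.IsFixedPt F (fun i => Real.log (z' i)) := by
    funext i
    have : (fun j => Real.exp (Real.log (z' j))) = z' := by
      funext j; exact Real.exp_log (hz'pos j)
    simp only [hF, this, hz'fix]
  have := hcon.fixedPoint_unique hlogfix
  funext i
  have h1 : Real.log (z' i) = xstar i := congrFun this i
  calc z' i = Real.exp (Real.log (z' i)) := (Real.exp_log (hz'pos i)).symm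
    _ = zopt i := by rw [h1]
end

section
/- Let C ∈ ℝ^{N×N} have nonnegative entries, ε > 0, and ϱ₀, ϱ₁ ∈ ℝ^N_{>0} probability vectors. Any minimizer M of ½⟨C, M⟩ + ε⟨M, log M⟩ over the transportation polytope {M ≥ 0, M1 = ϱ₀, Mᵀ1 = ϱ₁} has the Sinkhorn form M(i,j) = u(i)·exp(−C(i,j)/(2ε))·v(j) for some positive vectors u, v ∈ ℝ^N_{>0}. -/
open Finset

/-- The entropic-regularized transport objective `½⟨C,M⟩ + ε⟨M, log M⟩`. -/
noncomputable def entObj {N : ℕ} (C : Matrix (Fin N) (Fin N) ℝ) (ε : ℝ)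
    (M : Matrix (Fin N) (Fin N) ℝ) : ℝ :=
  (1 / 2) * (∑ i, ∑ j, C i j * M i j) + ε * ∑ i, ∑ j, M i j * Real.log (M i j)

/-- The transportation polytope with marginals `ϱ₀` (rows) and `ϱ₁` (columns). -/
def feasible {N : ℕ} (ϱ₀ ϱ₁ : Fin N → ℝ) (M : Matrix (Fin N) (Fin N) ℝ) : Prop :=
  (∀ i j, 0 ≤ M i j) ∧ (∀ i, ∑ j, M i j = ϱ₀ i) ∧ (∀ j, ∑ i, M i j = ϱ₁ j)

lemma entObj_eq {N : ℕ} (C : Matrix (Fin N) (Fin N) ℝ) (ε : ℝ)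
    (M : Matrix (Fin N) (Fin N) ℝ) :
    entObj C ε M = ∑ i, ∑ j,
      ((1/2) * (C i j * M i j) + ε * (M i j * Real.log (M i j))) := by
  simp only [entObj, Finset.mul_sum, ← Finset.sum_add_distrib]

theorem stmt_15 {N : ℕ} (C : Matrix (Fin N) (Fin N) ℝ) (hC : ∀ i j, 0 ≤ C i j)
    (ε : ℝ) (hε : 0 < ε) (ϱ₀ ϱ₁ : Fin N → ℝ)
    (hϱ₀ : ∀ i, 0 < ϱ₀ i) (hϱ₁ : ∀ i, 0 < ϱ₁ i)
    (hsum₀ : ∑ i, ϱ₀ i = 1) (hsum₁ : ∑ i, ϱ₁ i = 1)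
    (M : Matrix (Fin N) (Fin N) ℝ) (hMfeas : feasible ϱ₀ ϱ₁ M)
    (hMopt : ∀ M' : Matrix (Fin N) (Fin N) ℝ, feasible ϱ₀ ϱ₁ M' →
      entObj C ε M ≤ entObj C ε M') :
    ∃ u v : Fin N → ℝ, (∀ i, 0 < u i) ∧ (∀ j, 0 < v j) ∧
      ∀ i j, M i j = u i * Real.exp (-C i j / (2 * ε)) * v j := by
  obtain ⟨hMnn, hrow, hcol⟩ := hMfeas
  rcases Nat.eq_zero_or_pos N with hN | hN
  · exact ⟨fun _ => 1, fun _ => 1, fun i => one_pos, fun j => one_pos,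
      fun i j => absurd i.isLt (by omega)⟩
  haveI : NeZero N := ⟨hN.ne'⟩
  -- Step 1 : all entries of M are positive
  have hMpos : ∀ i j, 0 < M i j := by
    intro i j
    rcases (hMnn i j).lt_or_eq with h | h
    · exact h
    exfalso
    set P : Matrix (Fin N) (Fin N) ℝ := fun a b => ϱ₀ a * ϱ₁ b with hPdef
    have hPpos : ∀ a b, 0 < P a b := fun a b => mul_pos (hϱ₀ a) (hϱ₁ b)
    have hPfeas : feasible ϱ₀ ϱ₁ P := by
      refine ⟨fun a b => (hPpos a b).le, fun a => ?_, fun b => ?_⟩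
      · simp [hPdef, ← Finset.mul_sum, hsum₁]
      · simp [hPdef, ← Finset.sum_mul, hsum₀]
    set A : ℝ := entObj C ε P - entObj C ε M with hA
    set t : ℝ := min (1/2) (Real.exp (-(A + 1) / (ε * P i j))) with ht
    have ht0 : 0 < t := lt_min (by norm_num) (Real.exp_pos _)
    have ht1 : t ≤ 1 := le_trans (min_le_left _ _) (by norm_num)
    set Q : Matrix (Fin N) (Fin N) ℝ :=
      fun a b => (1 - t) * M a b + t * P a b with hQ
    have hQfeas : feasible ϱ₀ ϱ₁ Q := by
      refine ⟨fun a b => add_nonneg (mul_nonneg (by linarith) (hMnn a b))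
        (mul_nonneg ht0.le (hPpos a b).le), fun a => ?_, fun b => ?_⟩
      · show ∑ b, ((1 - t) * M a b + t * P a b) = ϱ₀ a
        rw [Finset.sum_add_distrib, ← Finset.mul_sum, ← Finset.mul_sum, hrow a,
          hPfeas.2.1 a]
        ring
      · show ∑ a, ((1 - t) * M a b + t * P a b) = ϱ₁ b
        rw [Finset.sum_add_distrib, ← Finset.mul_sum, ← Finset.mul_sum, hcol b,
          hPfeas.2.2 b]
        ring
    -- per-entry convexity bound
    have conv : ∀ a b, Q a b * Real.log (Q a b) ≤
        (1-t) * (M a b * Real.log (M a b)) + t * (P a b * Real.log (P a b)) := by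
      intro a b
      have := Real.convexOn_mul_log.2 (Set.mem_Ici.2 (hMnn a b))
        (Set.mem_Ici.2 (hPpos a b).le) (by linarith : (0:ℝ) ≤ 1 - t) ht0.le
        (by ring)
      simpa [hQ, smul_eq_mul] using this
    have eqij : Q i j * Real.log (Q i j) =
        (1-t) * (M i j * Real.log (M i j)) + t * (P i j * Real.log (P i j))
          + t * P i j * Real.log t := by
      have hq : Q i j = t * P i j := by simp [hQ, ← h]
      rw [hq, Real.log_mul ht0.ne' (hPpos i j).ne', ← h]
      ring
    -- entropy sum bound
    have hent : ∑ a, ∑ b, Q a b * Real.log (Q a b) ≤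
        (∑ a, ∑ b, ((1-t) * (M a b * Real.log (M a b))
          + t * (P a b * Real.log (P a b)))) + t * P i j * Real.log t := by
      set D : Fin N × Fin N → ℝ := fun p =>
        Q p.1 p.2 * Real.log (Q p.1 p.2)
          - ((1-t) * (M p.1 p.2 * Real.log (M p.1 p.2))
            + t * (P p.1 p.2 * Real.log (P p.1 p.2))) with hDdef
      have hmem : ((i, j) : Fin N × Fin N) ∈ (univ ×ˢ univ : Finset (Fin N × Fin N)) :=
        Finset.mem_product.2 ⟨mem_univ i, mem_univ j⟩
      have hDsum : ∑ p ∈ (univ ×ˢ univ : Finset (Fin N × Fin N)), D p ≤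
          t * P i j * Real.log t := by
        rw [← Finset.add_sum_erase _ _ hmem]
        have h1 : D (i, j) = t * P i j * Real.log t := by
          simp only [hDdef]
          linarith [eqij]
        have h2 : ∑ p ∈ (univ ×ˢ univ : Finset (Fin N × Fin N)).erase (i, j), D p ≤ 0 :=
          Finset.sum_nonpos (fun p _ => sub_nonpos.2 (conv p.1 p.2))
        linarith
      have hsplit : ∑ p ∈ (univ ×ˢ univ : Finset (Fin N × Fin N)), D p =
          (∑ a, ∑ b, Q a b * Real.log (Q a b))
            - ∑ a, ∑ b, ((1-t) * (M a b * Real.log (M a b))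
              + t * (P a b * Real.log (P a b))) := by
        rw [Finset.sum_sub_distrib]
        rw [Finset.sum_product, Finset.sum_product]
      linarith [hDsum, hsplit.symm.le]
    -- linear part equality
    have hlin : ∑ a, ∑ b, C a b * Q a b =
        (1-t) * (∑ a, ∑ b, C a b * M a b) + t * (∑ a, ∑ b, C a b * P a b) := by
      rw [Finset.mul_sum, Finset.mul_sum, ← Finset.sum_add_distrib]
      refine Finset.sum_congr rfl fun a _ => ?_
      rw [Finset.mul_sum, Finset.mul_sum, ← Finset.sum_add_distrib]
      refine Finset.sum_congr rfl fun b _ => ?_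
      simp only [hQ]
      ring
    have hsplitMP : ∑ a, ∑ b, ((1-t) * (M a b * Real.log (M a b))
          + t * (P a b * Real.log (P a b)))
        = (1-t) * (∑ a, ∑ b, M a b * Real.log (M a b))
          + t * (∑ a, ∑ b, P a b * Real.log (P a b)) := by
      rw [Finset.mul_sum, Finset.mul_sum, ← Finset.sum_add_distrib]
      refine Finset.sum_congr rfl fun a _ => ?_
      rw [Finset.mul_sum, Finset.mul_sum, ← Finset.sum_add_distrib]
    rw [hsplitMP] at hent
    have key : entObj C ε Q ≤ (1-t) * entObj C ε M + t * entObj C ε P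
        + ε * (t * P i j * Real.log t) := by
      simp only [entObj]
      have := mul_le_mul_of_nonneg_left hent hε.le
      rw [mul_add] at this
      nlinarith [this, hlin]
    have h1 : entObj C ε M ≤ entObj C ε Q := hMopt Q hQfeas
    have hlog : Real.log t ≤ -(A+1) / (ε * P i j) :=
      (Real.log_le_iff_le_exp ht0).2 (min_le_right _ _)
    have hεP : 0 < ε * P i j := mul_pos hε (hPpos i j)
    have hlogmul : ε * (P i j * Real.log t) ≤ -(A+1) := by
      have := mul_le_mul_of_nonneg_left hlog hεP.le
      rw [mul_div_cancel₀ _ hεP.ne'] at this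
      nlinarith [this]
    have h2 : 0 ≤ A + ε * (P i j * Real.log t) := by
      nlinarith [h1, key, ht0]
    linarith
  -- Step 2 : Sinkhorn structure from first-order conditions
  set F : Fin N → Fin N → ℝ := fun a b => Real.log (M a b) + C a b / (2*ε) with hF
  have hkey : ∀ i j, F i j + F 0 0 = F i 0 + F 0 j := by
    intro i j
    rcases eq_or_ne i 0 with rfl | hi
    · ring
    rcases eq_or_ne j 0 with rfl | hj
    · ring
    set r : Fin N → ℝ := fun a => (if a = i then (1:ℝ) else 0) - (if a = 0 then 1 else 0)
      with hr
    set c : Fin N → ℝ := fun b => (if b = j then (1:ℝ) else 0) - (if b = 0 then 1 else 0)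
      with hc
    have hr3 : ∀ a, r a = 0 ∨ r a = 1 ∨ r a = -1 := by
      intro a; simp only [hr]; split_ifs <;> norm_num
    have hc3 : ∀ b, c b = 0 ∨ c b = 1 ∨ c b = -1 := by
      intro b; simp only [hc]; split_ifs <;> norm_num
    have hrsum : ∑ a, r a = 0 := by
      simp [hr, Finset.sum_sub_distrib]
    have hcsum : ∑ b, c b = 0 := by
      simp [hc, Finset.sum_sub_distrib]
    set δ : ℝ := min (min (M i j) (M i 0)) (min (M 0 j) (M 0 0)) with hδdef
    have hδ : 0 < δ := lt_min (lt_min (hMpos i j) (hMpos i 0)) (lt_min (hMpos 0 j) (hMpos 0 0))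
    have hδle : ∀ a b, r a * c b ≠ 0 → δ ≤ M a b := by
      intro a b hab
      have ha : a = i ∨ a = 0 := by
        by_contra hcon
        push_neg at hcon
        apply hab
        simp [hr, hcon.1, hcon.2]
      have hb : b = j ∨ b = 0 := by
        by_contra hcon
        push_neg at hcon
        apply hab
        simp [hc, hcon.1, hcon.2]
      rcases ha with rfl | rfl <;> rcases hb with rfl | rfl
      · exact le_trans (min_le_left _ _) (min_le_left _ _)
      · exact le_trans (min_le_left _ _) (min_le_right _ _)
      · exact le_trans (min_le_right _ _) (min_le_left _ _)
      · exact le_trans (min_le_right _ _) (min_le_right _ _)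
    have hfeas : ∀ t : ℝ, |t| ≤ δ →
        feasible ϱ₀ ϱ₁ (fun a b => M a b + t * (r a * c b)) := by
      intro t htδ
      refine ⟨fun a b => ?_, fun a => ?_, fun b => ?_⟩
      · show 0 ≤ M a b + t * (r a * c b)
        rcases eq_or_ne (r a * c b) 0 with h0 | h0
        · simp [h0, hMnn a b]
        · have habs : |r a * c b| = 1 := by
            rcases hr3 a with h1 | h1 | h1
            · exact absurd (by rw [h1, zero_mul]) h0
            all_goals rcases hc3 b with h2 | h2 | h2
            · exact absurd (by rw [h2, mul_zero]) h0
            · rw [h1, h2]; norm_num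
            · rw [h1, h2]; norm_num
            · exact absurd (by rw [h2, mul_zero]) h0
            · rw [h1, h2]; norm_num
            · rw [h1, h2]; norm_num
          have h3 : |t * (r a * c b)| ≤ δ := by
            rw [abs_mul, habs, mul_one]; exact htδ
          have h4 := hδle a b h0
          have h5 := neg_abs_le (t * (r a * c b))
          linarith
      · show ∑ b, (M a b + t * (r a * c b)) = ϱ₀ a
        rw [Finset.sum_add_distrib, hrow a]
        have : ∑ b, t * (r a * c b) = t * r a * ∑ b, c b := by
          rw [Finset.mul_sum]
          exact Finset.sum_congr rfl fun b _ => by ring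
        rw [this, hcsum, mul_zero, add_zero]
      · show ∑ a, (M a b + t * (r a * c b)) = ϱ₁ b
        rw [Finset.sum_add_distrib, hcol b]
        have : ∑ a, t * (r a * c b) = t * c b * ∑ a, r a := by
          rw [Finset.mul_sum]
          exact Finset.sum_congr rfl fun a _ => by ring
        rw [this, hrsum, mul_zero, add_zero]
    set φ : ℝ → ℝ := fun t => entObj C ε (fun a b => M a b + t * (r a * c b)) with hφdef
    have hφ0 : φ 0 = entObj C ε M := by
      simp only [hφdef, zero_mul, add_zero]
    have hlmin : IsLocalMin φ 0 := by
      have : ∀ᶠ t in nhds (0:ℝ), φ 0 ≤ φ t := by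
        refine Metric.eventually_nhds_iff.2 ⟨δ, hδ, fun t htd => ?_⟩
        rw [hφ0]
        have : |t| ≤ δ := by
          rw [Real.dist_eq, sub_zero] at htd
          exact htd.le
        exact hMopt _ (hfeas t this)
      exact this
    have hderiv : HasDerivAt φ
        (∑ a, ∑ b, ((1/2)*C a b + ε*(Real.log (M a b)+1)) * (r a * c b)) 0 := by
      have hφeq : φ = fun t => ∑ a, ∑ b,
          ((1/2) * (C a b * (M a b + t * (r a * c b)))
            + ε * ((M a b + t * (r a * c b))
              * Real.log (M a b + t * (r a * c b)))) := by
        funext t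
        exact entObj_eq C ε _
      rw [hφeq]
      refine HasDerivAt.fun_sum fun a _ => HasDerivAt.fun_sum fun b _ => ?_
      have hx : HasDerivAt (fun t : ℝ => M a b + t * (r a * c b)) (r a * c b) 0 := by
        simpa using ((hasDerivAt_id (0:ℝ)).mul_const (r a * c b)).const_add (M a b)
      have hne : (M a b + 0 * (r a * c b)) ≠ 0 := by
        simpa using (hMpos a b).ne'
      have hcomp := (Real.hasDerivAt_mul_log hne).comp 0 hx
      simp only [Function.comp_def, zero_mul, add_zero] at hcomp
      have h2 := ((hx.const_mul (C a b)).const_mul ((1:ℝ)/2)).fun_add (hcomp.const_mul ε)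
      convert h2 using 1
      ring
    have hD0 := hlmin.hasDerivAt_eq_zero hderiv
    have hsumw : ∀ (w : Fin N → Fin N → ℝ), ∑ a, ∑ b, w a b * (r a * c b)
        = w i j - w i 0 - w 0 j + w 0 0 := by
      intro w
      have inner : ∀ a, ∑ b, w a b * (r a * c b) = r a * (w a j - w a 0) := by
        intro a
        simp only [hc, mul_sub, mul_ite, mul_one, mul_zero, Finset.sum_sub_distrib,
          Finset.sum_ite_eq', Finset.mem_univ, if_true]
        ring
      rw [show (∑ a, ∑ b, w a b * (r a * c b)) = ∑ a, r a * (w a j - w a 0) from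
        Finset.sum_congr rfl fun a _ => inner a]
      simp only [hr, sub_mul, ite_mul, one_mul, zero_mul, Finset.sum_sub_distrib,
        Finset.sum_ite_eq', Finset.mem_univ, if_true]
      ring
    rw [hsumw] at hD0
    have hstep : (Real.log (M i j) + Real.log (M 0 0) - Real.log (M i 0)
        - Real.log (M 0 j)) * (2*ε) = -(C i j + C 0 0 - C i 0 - C 0 j) := by
      linarith [hD0]
    have h2 : Real.log (M i j) + Real.log (M 0 0) - Real.log (M i 0) - Real.log (M 0 j)
        = (-(C i j + C 0 0 - C i 0 - C 0 j)) / (2*ε) := by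
      rw [eq_div_iff (by positivity : (2:ℝ)*ε ≠ 0)]
      exact hstep
    simp only [hF]
    linear_combination h2
  refine ⟨fun i => Real.exp (F i 0 - F 0 0), fun j => Real.exp (F 0 j),
    fun i => Real.exp_pos _, fun j => Real.exp_pos _, fun i j => ?_⟩
  have h1 : F i 0 - F 0 0 + (-C i j / (2*ε)) + F 0 j = Real.log (M i j) := by
    have hk := hkey i j
    simp only [hF] at hk ⊢
    linear_combination -hk
  rw [← Real.exp_add, ← Real.exp_add, h1, Real.exp_log (hMpos i j)]
end
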